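/- arXiv:1502.06245 — 2 statements merged into one kernel-verified Lean document; each statement's English description precedes it below -/
import Mathlib

section
/- Let H be a graph property that is hereditary (closed under subgraphs) and closed under disjoint union with K₁. Then for every graph G and every edge e of G, γ_H(G_e) ≤ γ_H(G) + 1, where G_e is the graph obtained from G by subdividing the edge e once. -/
open SimpleGraph

/-- A graph property: a class of finite simple graphs on arbitrary vertex types. -/
abbrev GraphProp := ∀ (V : Type), SimpleGraph V → Prop

/-- Closure under graph isomorphism. -/
def IsoClosed (P : GraphProp) : Prop :=
  ∀ (V W : Type) (G : SimpleGraph V) (H : SimpleGraph W), Nonempty (G ≃g H) → P V G → P W H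

/-- A property is nondegenerate if it contains all edgeless graphs. -/
def Nondegenerate (P : GraphProp) : Prop :=
  IsoClosed P ∧ ∀ (V : Type), P V ⊥

/-- Closed under induced subgraphs. -/
def InducedHereditary (P : GraphProp) : Prop :=
  IsoClosed P ∧ ∀ (V : Type) (G : SimpleGraph V) (s : Set V), P V G → P s (G.induce s)

/-- Closed under all subgraphs. -/
def Hereditary (P : GraphProp) : Prop :=
  InducedHereditary P ∧ ∀ (V : Type) (G G' : SimpleGraph V), G' ≤ G → P V G → P V G'

/-- The graph `G` together with one new isolated vertex. -/
def addK1 {V : Type} (G : SimpleGraph V) : SimpleGraph (V ⊕ Unit) where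
  Adj a b := ∃ x y, a = Sum.inl x ∧ b = Sum.inl y ∧ G.Adj x y
  symm := ⟨by rintro a b ⟨x, y, rfl, rfl, h⟩; exact ⟨y, x, rfl, rfl, h.symm⟩⟩
  loopless := ⟨by rintro a ⟨x, y, rfl, hy, h⟩; simp only [Sum.inl.injEq] at hy; subst hy; exact G.irrefl h⟩

/-- Closure under disjoint union with `K₁`. -/
def ClosedUnderK1 (P : GraphProp) : Prop :=
  ∀ (V : Type) (G : SimpleGraph V), P V G → P (V ⊕ Unit) (addK1 G)

/-- `S` is a dominating set of `G`. -/
def IsDominating {V : Type} (G : SimpleGraph V) (S : Set V) : Prop :=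
  ∀ v ∉ S, ∃ u ∈ S, G.Adj u v

/-- `S` is a dominating set inducing a subgraph with property `P`. -/
def IsDomPSet (P : GraphProp) {V : Type} (G : SimpleGraph V) (S : Set V) : Prop :=
  IsDominating G S ∧ P S (G.induce S)

/-- The domination number with respect to the property `P`. -/
noncomputable def gammaP (P : GraphProp) {V : Type} [Fintype V] (G : SimpleGraph V) : ℕ :=
  sInf (Set.ncard '' {S : Set V | IsDomPSet P G S})

/-- A minimum dominating `P`-set. -/
def IsGammaSet (P : GraphProp) {V : Type} [Fintype V] (G : SimpleGraph V) (S : Set V) : Prop :=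
  IsDomPSet P G S ∧ S.ncard = gammaP P G

/-- The ordinary domination number. -/
noncomputable def gamma {V : Type} [Fintype V] (G : SimpleGraph V) : ℕ :=
  sInf (Set.ncard '' {S : Set V | IsDominating G S})

/-- The graph obtained from `G` by deleting the edge `uv` and replacing it by the
path `u - x₀ - x₁ - ⋯ - x_{t-1} - v` through `t` new vertices. -/
def subdiv {V : Type} (G : SimpleGraph V) (u v : V) (t : ℕ) : SimpleGraph (V ⊕ Fin t) where
  Adj a b := match a, b with
    | Sum.inl a, Sum.inl b => G.Adj a b ∧ ¬((a = u ∧ b = v) ∨ (a = v ∧ b = u))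
    | Sum.inl a, Sum.inr i => (a = u ∧ (i : ℕ) = 0) ∨ (a = v ∧ (i : ℕ) + 1 = t)
    | Sum.inr i, Sum.inl a => (a = u ∧ (i : ℕ) = 0) ∨ (a = v ∧ (i : ℕ) + 1 = t)
    | Sum.inr i, Sum.inr j => (i : ℕ) + 1 = (j : ℕ) ∨ (j : ℕ) + 1 = (i : ℕ)
  symm := ⟨by
    rintro (a | i) (b | j) h
    · exact ⟨h.1.symm, fun hc => h.2 (by tauto)⟩
    · exact h
    · exact h
    · tauto⟩
  loopless := ⟨by
    rintro (a | i) h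
    · exact G.irrefl h.1
    · omega⟩

/-- The private neighbour set `pn_G[x, X] = {y : N[y,G] ∩ X = {x}}`. -/
def pn {V : Type} (G : SimpleGraph V) (X : Set V) (x : V) : Set V :=
  {y | insert y (G.neighborSet y) ∩ X = {x}}

/-- The graph `G` with the vertex `v` deleted. -/
abbrev delVert {V : Type} (G : SimpleGraph V) (v : V) : SimpleGraph {w : V // w ≠ v} :=
  G.induce {w : V | w ≠ v}

/-- An independent set. -/
def IsIndep {V : Type} (G : SimpleGraph V) (S : Set V) : Prop :=
  S.Pairwise fun a b => ¬ G.Adj a b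

-- ================= helpers =================

private def isoOfNoAdj {α β : Type} (G : SimpleGraph α) (H : SimpleGraph β) (e : α ≃ β)
    (hG : ∀ a b, ¬ G.Adj a b) (hH : ∀ a b, ¬ H.Adj a b) : G ≃g H :=
  ⟨e, by intro a b; exact iff_of_false (hH _ _) (hG _ _)⟩

private lemma P_bot (P : GraphProp) (h1 : Hereditary P) (h2 : ClosedUnderK1 P)
    {W : Type} {K : SimpleGraph W} (hK : P W K) (V : Type) [Fintype V] :
    P V (⊥ : SimpleGraph V) := by
  have h0 : P (↥(∅ : Set W)) (K.induce ∅) := h1.1.2 W K ∅ hK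
  have hfin : ∀ n, P (Fin n) (⊥ : SimpleGraph (Fin n)) := by
    intro n
    induction n with
    | zero =>
      haveI : IsEmpty (↥(∅ : Set W)) := ⟨fun a => a.2⟩
      exact h1.1.1 _ _ _ _ ⟨isoOfNoAdj _ _ (Equiv.equivOfIsEmpty _ _)
        (fun a _ _ => a.2) (fun a b h => h)⟩ h0
    | succ n ih =>
      have hstep : P (Fin n ⊕ Unit) (addK1 (⊥ : SimpleGraph (Fin n))) := h2 _ _ ih
      refine h1.1.1 _ _ _ _ ⟨isoOfNoAdj _ _ ?_ ?_ (fun a b h => h)⟩ hstep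
      · exact (Equiv.sumCongr (Equiv.refl (Fin n)) (Equiv.ofUnique Unit (Fin 1))).trans
          finSumFinEquiv
      · rintro a b ⟨x, y, rfl, rfl, h⟩; exact h
  exact h1.1.1 _ _ _ _ ⟨isoOfNoAdj _ _ (Fintype.equivFin V).symm (fun a b h => h) (fun a b h => h)⟩
    (hfin (Fintype.card V))

private lemma exists_domP (P : GraphProp) (h1 : Hereditary P) (h2 : ClosedUnderK1 P)
    {W : Type} {K : SimpleGraph W} (hK : P W K) {V : Type} [Fintype V] (G : SimpleGraph V) :
    ∃ S : Set V, IsDomPSet P G S := by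
  obtain ⟨S, hSI, hmax⟩ := Set.Finite.exists_maximalFor id {S : Set V | IsIndep G S}
    (Set.toFinite _) ⟨∅, Set.pairwise_empty _⟩
  simp only [Set.mem_setOf_eq, id] at hSI hmax
  have hdom : IsDominating G S := by
    intro w hw
    by_contra hcon
    push_neg at hcon
    have hins : IsIndep G (insert w S) := by
      intro a ha b hb hne
      rcases ha with rfl | ha
      · rcases hb with rfl | hb
        · exact absurd rfl hne
        · exact fun hadj => hcon b hb hadj.symm
      · rcases hb with rfl | hb
        · exact fun hadj => hcon a ha hadj
        · exact hSI ha hb hne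
    have := hmax hins (Set.subset_insert w S)
    exact hw (this (Set.mem_insert w S))
  refine ⟨S, hdom, ?_⟩
  have : G.induce S = (⊥ : SimpleGraph S) := by
    ext a b
    simp only [comap_adj, Function.Embedding.coe_subtype, bot_adj, iff_false]
    intro h
    exact hSI a.2 b.2 (fun he => G.irrefl (Subtype.ext he ▸ h)) h
  rw [this]
  haveI := Fintype.ofFinite ↥S
  exact P_bot P h1 h2 hK _

private lemma subdiv_comm {V : Type} (G : SimpleGraph V) (u v : V) :
    subdiv G u v 1 = subdiv G v u 1 := by
  have h0 : ∀ i : Fin 1, (i : ℕ) = 0 := fun i => Nat.lt_one_iff.mp i.is_lt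
  ext a b
  rcases a with a | i <;> rcases b with b | j <;> simp [subdiv, h0] <;> tauto

private lemma L1 (P : GraphProp) (h1 : Hereditary P) {V : Type} [Fintype V]
    (G : SimpleGraph V) (u v : V) (S : Set V) (hP : P ↥S (G.induce S))
    (hdom : IsDominating (subdiv G u v 1) (Sum.inl '' S)) :
    IsDomPSet P (subdiv G u v 1) (Sum.inl '' S) ∧
      (Sum.inl '' S : Set (V ⊕ Fin 1)).ncard = S.ncard := by
  classical
  have hinj : Function.Injective (Sum.inl : V → V ⊕ Fin 1) := Sum.inl_injective
  let f : ↥S → ↥(Sum.inl '' S : Set (V ⊕ Fin 1)) := fun a => ⟨Sum.inl a.1, ⟨a.1, a.2, rfl⟩⟩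
  have hbij : Function.Bijective f := by
    constructor
    · intro a b h
      exact Subtype.ext (hinj (congrArg Subtype.val h))
    · rintro ⟨b, w, hw, rfl⟩
      exact ⟨⟨w, hw⟩, rfl⟩
  let e1 : ↥S ≃ ↥(Sum.inl '' S : Set (V ⊕ Fin 1)) := Equiv.ofBijective f hbij
  let K : SimpleGraph ↥(Sum.inl '' S : Set (V ⊕ Fin 1)) :=
    SimpleGraph.comap (fun b => (e1.symm b : ↥S)) (G.induce S)
  have hPK : P _ K := by
    refine h1.1.1 _ _ _ _ ⟨⟨e1, ?_⟩⟩ hP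
    intro a b
    show (G.induce S).Adj (e1.symm (e1 a)) (e1.symm (e1 b)) ↔ _
    rw [e1.symm_apply_apply, e1.symm_apply_apply]
  have hle : (subdiv G u v 1).induce (Sum.inl '' S) ≤ K := by
    intro a b hab
    have ha : (a : V ⊕ Fin 1) = Sum.inl ((e1.symm a : ↥S) : V) :=
      (congrArg Subtype.val (e1.apply_symm_apply a)).symm
    have hb : (b : V ⊕ Fin 1) = Sum.inl ((e1.symm b : ↥S) : V) :=
      (congrArg Subtype.val (e1.apply_symm_apply b)).symm
    have hab' : (subdiv G u v 1).Adj (Sum.inl ((e1.symm a : ↥S) : V))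
        (Sum.inl ((e1.symm b : ↥S) : V)) := by rw [← ha, ← hb]; exact hab
    exact hab'.1
  exact ⟨⟨hdom, h1.2 _ K _ hle hPK⟩, Set.ncard_image_of_injective S hinj⟩

private lemma L2 (P : GraphProp) (h1 : Hereditary P) (h2 : ClosedUnderK1 P) {V : Type} [Fintype V]
    (G : SimpleGraph V) (u v : V) (S : Set V) (z : V ⊕ Fin 1)
    (hz : z ∉ (Sum.inl '' S : Set (V ⊕ Fin 1)))
    (hziso : ∀ w ∈ S, ¬ (subdiv G u v 1).Adj z (Sum.inl w))
    (hP : P ↥S (G.induce S))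
    (hdom : IsDominating (subdiv G u v 1) (insert z (Sum.inl '' S))) :
    IsDomPSet P (subdiv G u v 1) (insert z (Sum.inl '' S)) ∧
      (insert z (Sum.inl '' S) : Set (V ⊕ Fin 1)).ncard = S.ncard + 1 := by
  classical
  have hinj : Function.Injective (Sum.inl : V → V ⊕ Fin 1) := Sum.inl_injective
  set T : Set (V ⊕ Fin 1) := insert z (Sum.inl '' S) with hT
  let f : ↥S ⊕ Unit → ↥T := fun p => match p with
    | Sum.inl a => ⟨Sum.inl a.1, Set.mem_insert_of_mem _ ⟨a.1, a.2, rfl⟩⟩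
    | Sum.inr _ => ⟨z, Set.mem_insert _ _⟩
  have hbij : Function.Bijective f := by
    constructor
    · rintro (a | a) (b | b) h
      · exact congrArg Sum.inl (Subtype.ext (hinj (congrArg Subtype.val h)))
      · exact absurd ⟨a.1, a.2, show Sum.inl a.1 = z from congrArg Subtype.val h⟩ hz
      · exact absurd ⟨b.1, b.2, (show z = Sum.inl b.1 from congrArg Subtype.val h).symm⟩ hz
      · rfl
    · rintro ⟨b, hb⟩
      rcases hb with rfl | ⟨w, hw, rfl⟩
      · exact ⟨Sum.inr (), rfl⟩
      · exact ⟨Sum.inl ⟨w, hw⟩, rfl⟩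
  let e2 : (↥S ⊕ Unit) ≃ ↥T := Equiv.ofBijective f hbij
  have hPadd : P (↥S ⊕ Unit) (addK1 (G.induce S)) := h2 _ _ hP
  let K : SimpleGraph ↥T := SimpleGraph.comap (fun b => e2.symm b) (addK1 (G.induce S))
  have hPK : P _ K := by
    refine h1.1.1 _ _ _ _ ⟨⟨e2, ?_⟩⟩ hPadd
    intro a b
    show (addK1 (G.induce S)).Adj (e2.symm (e2 a)) (e2.symm (e2 b)) ↔ _
    rw [e2.symm_apply_apply, e2.symm_apply_apply]
  have hle : (subdiv G u v 1).induce T ≤ K := by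
    intro a b hab
    show (addK1 (G.induce S)).Adj (e2.symm a) (e2.symm b)
    have ha : (a : V ⊕ Fin 1) = (f (e2.symm a) : V ⊕ Fin 1) :=
      (congrArg Subtype.val (e2.apply_symm_apply a)).symm
    have hb : (b : V ⊕ Fin 1) = (f (e2.symm b) : V ⊕ Fin 1) :=
      (congrArg Subtype.val (e2.apply_symm_apply b)).symm
    have hab' : (subdiv G u v 1).Adj (f (e2.symm a) : V ⊕ Fin 1) (f (e2.symm b) : V ⊕ Fin 1) := by
      rw [← ha, ← hb]; exact hab
    rcases hp : e2.symm a with p | p <;> rcases hq : e2.symm b with q | q <;>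
        rw [hp, hq] at hab'
    · exact ⟨p, q, rfl, rfl, hab'.1⟩
    · exact (hziso p.1 p.2 hab'.symm).elim
    · exact (hziso q.1 q.2 hab').elim
    · exact ((subdiv G u v 1).irrefl hab').elim
  refine ⟨⟨hdom, h1.2 _ K _ hle hPK⟩, ?_⟩
  rw [Set.ncard_insert_of_notMem hz, Set.ncard_image_of_injective S hinj]

private lemma keyAux (P : GraphProp) (h1 : Hereditary P) (h2 : ClosedUnderK1 P)
    {V : Type} [Fintype V] (G : SimpleGraph V) (u v : V) (S : Set V)
    (hdomS : IsDominating G S) (hPS : P ↥S (G.induce S)) (hvu : v ∈ S → u ∈ S) :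
    ∃ S' : Set (V ⊕ Fin 1), IsDomPSet P (subdiv G u v 1) S' ∧ S'.ncard ≤ S.ncard + 1 := by
  classical
  by_cases hv : v ∈ S
  · -- case 1 : u, v ∈ S ; take S' = Sum.inl '' S
    have hu : u ∈ S := hvu hv
    have hdom : IsDominating (subdiv G u v 1) (Sum.inl '' S) := by
      rintro (w | i) hw
      · have hwS : w ∉ S := fun h => hw ⟨w, h, rfl⟩
        obtain ⟨s, hs, hadj⟩ := hdomS w hwS
        refine ⟨Sum.inl s, ⟨s, hs, rfl⟩, ?_⟩
        show G.Adj s w ∧ ¬((s = u ∧ w = v) ∨ (s = v ∧ w = u))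
        refine ⟨hadj, ?_⟩
        rintro (⟨rfl, rfl⟩ | ⟨rfl, rfl⟩)
        exacts [hwS hv, hwS hu]
      · refine ⟨Sum.inl u, ⟨u, hu, rfl⟩, ?_⟩
        show (u = u ∧ (i : ℕ) = 0) ∨ (u = v ∧ (i : ℕ) + 1 = 1)
        exact Or.inl ⟨rfl, Nat.lt_one_iff.mp i.is_lt⟩
    obtain ⟨h, hc⟩ := L1 P h1 G u v S hPS hdom
    exact ⟨_, h, by omega⟩
  · by_cases hu : u ∈ S
    · by_cases h3 : ∃ s ∈ S, s ≠ u ∧ G.Adj s v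
      · -- case 3a : u ∈ S, v ∉ S, v has an S-neighbour ≠ u ; take S' = Sum.inl '' S
        have hdom : IsDominating (subdiv G u v 1) (Sum.inl '' S) := by
          rintro (w | i) hw
          · have hwS : w ∉ S := fun h => hw ⟨w, h, rfl⟩
            by_cases hwv : w = v
            · obtain ⟨s, hs, hsu, hsv⟩ := h3
              refine ⟨Sum.inl s, ⟨s, hs, rfl⟩, ?_⟩
              rw [hwv]
              show G.Adj s v ∧ ¬((s = u ∧ v = v) ∨ (s = v ∧ v = u))
              refine ⟨hsv, ?_⟩
              rintro (⟨rfl, -⟩ | ⟨rfl, -⟩)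
              exacts [hsu rfl, hv hs]
            · obtain ⟨s, hs, hadj⟩ := hdomS w hwS
              refine ⟨Sum.inl s, ⟨s, hs, rfl⟩, ?_⟩
              show G.Adj s w ∧ ¬((s = u ∧ w = v) ∨ (s = v ∧ w = u))
              refine ⟨hadj, ?_⟩
              rintro (⟨rfl, rfl⟩ | ⟨rfl, rfl⟩)
              exacts [hwv rfl, hv hs]
          · refine ⟨Sum.inl u, ⟨u, hu, rfl⟩, ?_⟩
            show (u = u ∧ (i : ℕ) = 0) ∨ (u = v ∧ (i : ℕ) + 1 = 1)
            exact Or.inl ⟨rfl, Nat.lt_one_iff.mp i.is_lt⟩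
        obtain ⟨h, hc⟩ := L1 P h1 G u v S hPS hdom
        exact ⟨_, h, by omega⟩
      · -- case 3b : u ∈ S, v ∉ S, every S-neighbour of v is u ; take S' = insert (inl v) _
        push_neg at h3
        have hz : (Sum.inl v : V ⊕ Fin 1) ∉ (Sum.inl '' S : Set (V ⊕ Fin 1)) := by
          rintro ⟨w, hw, hwe⟩
          exact hv (Sum.inl_injective hwe ▸ hw)
        have hziso : ∀ w ∈ S, ¬ (subdiv G u v 1).Adj (Sum.inl v) (Sum.inl w) := by
          intro w hw hadj
          have hadj' : G.Adj v w ∧ ¬((v = u ∧ w = v) ∨ (v = v ∧ w = u)) := hadj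
          have hwu : w = u := by
            by_contra hne
            exact h3 w hw hne hadj'.1.symm
          exact hadj'.2 (Or.inr ⟨rfl, hwu⟩)
        have hdom : IsDominating (subdiv G u v 1)
            (insert (Sum.inl v) (Sum.inl '' S : Set (V ⊕ Fin 1))) := by
          rintro (w | i) hw
          · have hwv : w ≠ v := fun h => hw (h ▸ Set.mem_insert _ _)
            have hwS : w ∉ S := fun h => hw (Set.mem_insert_of_mem _ ⟨w, h, rfl⟩)
            obtain ⟨s, hs, hadj⟩ := hdomS w hwS
            refine ⟨Sum.inl s, Set.mem_insert_of_mem _ ⟨s, hs, rfl⟩, ?_⟩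
            show G.Adj s w ∧ ¬((s = u ∧ w = v) ∨ (s = v ∧ w = u))
            refine ⟨hadj, ?_⟩
            rintro (⟨rfl, rfl⟩ | ⟨rfl, rfl⟩)
            exacts [hwv rfl, hv hs]
          · refine ⟨Sum.inl v, Set.mem_insert _ _, ?_⟩
            show (v = u ∧ (i : ℕ) = 0) ∨ (v = v ∧ (i : ℕ) + 1 = 1)
            exact Or.inr ⟨rfl, by rw [Nat.lt_one_iff.mp i.is_lt]⟩
        obtain ⟨h, hc⟩ := L2 P h1 h2 G u v S (Sum.inl v) hz hziso hPS hdom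
        exact ⟨_, h, by omega⟩
    · -- case 2 : u ∉ S, v ∉ S ; take S' = insert (inr 0) (Sum.inl '' S)
      have hz : (Sum.inr 0 : V ⊕ Fin 1) ∉ (Sum.inl '' S : Set (V ⊕ Fin 1)) := by
        rintro ⟨w, -, hwe⟩
        exact Sum.inl_ne_inr hwe
      have hziso : ∀ w ∈ S, ¬ (subdiv G u v 1).Adj (Sum.inr 0) (Sum.inl w) := by
        intro w hw hadj
        have hadj' : (w = u ∧ ((0 : Fin 1) : ℕ) = 0) ∨ (w = v ∧ ((0 : Fin 1) : ℕ) + 1 = 1) := hadj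
        rcases hadj' with ⟨rfl, -⟩ | ⟨rfl, -⟩
        exacts [hu hw, hv hw]
      have hdom : IsDominating (subdiv G u v 1)
          (insert (Sum.inr 0) (Sum.inl '' S : Set (V ⊕ Fin 1))) := by
        rintro (w | i) hw
        · have hwS : w ∉ S := fun h => hw (Set.mem_insert_of_mem _ ⟨w, h, rfl⟩)
          obtain ⟨s, hs, hadj⟩ := hdomS w hwS
          refine ⟨Sum.inl s, Set.mem_insert_of_mem _ ⟨s, hs, rfl⟩, ?_⟩
          show G.Adj s w ∧ ¬((s = u ∧ w = v) ∨ (s = v ∧ w = u))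
          refine ⟨hadj, ?_⟩
          rintro (⟨rfl, rfl⟩ | ⟨rfl, rfl⟩)
          exacts [hu hs, hv hs]
        · have : (Sum.inr i : V ⊕ Fin 1) = Sum.inr 0 := by
            congr 1
            exact Subsingleton.elim i 0
          exact absurd (by rw [this]; exact Set.mem_insert _ _) hw
      obtain ⟨h, hc⟩ := L2 P h1 h2 G u v S (Sum.inr 0) hz hziso hPS hdom
      exact ⟨_, h, by omega⟩

private lemma key (P : GraphProp) (h1 : Hereditary P) (h2 : ClosedUnderK1 P)
    {V : Type} [Fintype V] (G : SimpleGraph V) (u v : V) (S : Set V)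
    (hdomS : IsDominating G S) (hPS : P ↥S (G.induce S)) :
    ∃ S' : Set (V ⊕ Fin 1), IsDomPSet P (subdiv G u v 1) S' ∧ S'.ncard ≤ S.ncard + 1 := by
  by_cases hvu : v ∈ S → u ∈ S
  · exact keyAux P h1 h2 G u v S hdomS hPS hvu
  · push_neg at hvu
    rw [subdiv_comm]
    exact keyAux P h1 h2 G v u S hdomS hPS (fun h => absurd h hvu.2)


/-- `γ_H(G_e) ≤ γ_H(G) + 1` for hereditary `H` closed under union with `K₁`. -/
theorem gammaP_subdiv_one_le (P : GraphProp) (h1 : Hereditary P) (h2 : ClosedUnderK1 P)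
    {V : Type} [Fintype V] (G : SimpleGraph V) (u v : V) (he : G.Adj u v) :
    gammaP P (subdiv G u v 1) ≤ gammaP P G + 1 := by
  by_cases hP : ∃ (W : Type) (K : SimpleGraph W), P W K
  · obtain ⟨W, K, hK⟩ := hP
    have hne : {S : Set V | IsDomPSet P G S}.Nonempty := exists_domP P h1 h2 hK G
    have hmem : gammaP P G ∈ Set.ncard '' {S : Set V | IsDomPSet P G S} :=
      Nat.sInf_mem (hne.image _)
    obtain ⟨S, hS, hcard⟩ := hmem
    obtain ⟨S', hS', hcard'⟩ := key P h1 h2 G u v S hS.1 hS.2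
    calc gammaP P (subdiv G u v 1) ≤ S'.ncard := Nat.sInf_le ⟨S', hS', rfl⟩
      _ ≤ S.ncard + 1 := hcard'
      _ = gammaP P G + 1 := by rw [hcard]
  · have hempty : {S : Set (V ⊕ Fin 1) | IsDomPSet P (subdiv G u v 1) S} = ∅ := by
      ext S
      simp only [Set.mem_setOf_eq, Set.mem_empty_iff_false, iff_false]
      rintro ⟨-, hp⟩
      exact hP ⟨_, _, hp⟩
    rw [gammaP, hempty, Set.image_empty, Nat.sInf_empty]
    omega
end

section
/- For every graph G with at least one edge, there exist an edge e and t ∈ {1,2,3} such that γ(G_{e,t}) ≠ γ(G); that is, the domination multisubdivision number msd(G) ≤ 3. -/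
open SimpleGraph

lemma subdiv_inr_one_not_mem_dom {V : Type} {G : SimpleGraph V} {u v : V}
    {S : Set (V ⊕ Fin 3)} (hS : IsDominating (subdiv G u v 3) S) :
    ∃ i : Fin 3, Sum.inr i ∈ S := by
  by_cases h1 : (Sum.inr 1 : V ⊕ Fin 3) ∈ S
  · exact ⟨1, h1⟩
  · obtain ⟨d, hd, hadj⟩ := hS _ h1
    cases d with
    | inl a =>
      exfalso
      rcases hadj with ⟨-, h⟩ | ⟨-, h⟩ <;> simp at h
    | inr j => exact ⟨j, hd⟩

lemma exists_smaller_dom {V : Type} [Fintype V] {G : SimpleGraph V} {u v : V} (huv : G.Adj u v)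
    (S : Set (V ⊕ Fin 3)) (hS : IsDominating (subdiv G u v 3) S) :
    ∃ D : Set V, IsDominating G D ∧ D.ncard + 1 ≤ S.ncard := by
  classical
  set A : Set V := Sum.inl ⁻¹' S with hA
  set P : Set (V ⊕ Fin 3) := S ∩ Set.range Sum.inr with hP
  have hsplit : S.ncard = A.ncard + P.ncard := by
    have hSeq : S = (Sum.inl '' A) ∪ P := by
      ext x
      cases x with
      | inl w => simp [hA, hP]
      | inr i => simp [hA, hP]
    have hdisj : Disjoint (Sum.inl '' A) P := by
      rw [Set.disjoint_left]
      rintro x ⟨w, -, rfl⟩ ⟨-, i, h⟩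
      cases h
    rw [hSeq, Set.ncard_union_eq hdisj (Set.toFinite _) (Set.toFinite _),
        Set.ncard_image_of_injective _ Sum.inl_injective]
  obtain ⟨i, hi⟩ := subdiv_inr_one_not_mem_dom hS
  by_cases h2 : ∃ i j : Fin 3, i ≠ j ∧ Sum.inr i ∈ S ∧ Sum.inr j ∈ S
  · -- at least two subdivision vertices are in S : use A ∪ {v}
    obtain ⟨i, j, hij, hi, hj⟩ := h2
    have hP2 : 2 ≤ P.ncard := by
      have : 1 < P.ncard := (Set.one_lt_ncard (Set.toFinite _)).2
        ⟨Sum.inr i, ⟨hi, i, rfl⟩, Sum.inr j, ⟨hj, j, rfl⟩, by simp [hij]⟩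
      omega
    refine ⟨insert v A, ?_, ?_⟩
    · intro w hw
      have hwv : w ≠ v := fun h => hw (h ▸ Set.mem_insert v A)
      have hwA : Sum.inl w ∉ S := fun h => hw (Set.mem_insert_of_mem _ h)
      obtain ⟨d, hd, hadj⟩ := hS _ hwA
      cases d with
      | inl a => exact ⟨a, Set.mem_insert_of_mem _ hd, hadj.1⟩
      | inr k =>
        rcases hadj with ⟨rfl, -⟩ | ⟨rfl, -⟩
        · exact ⟨v, Set.mem_insert v A, huv.symm⟩
        · exact absurd rfl hwv
    · have h1 := Set.ncard_insert_le v A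
      omega
  · -- exactly one subdivision vertex is in S : use A
    push_neg at h2
    have huniq : ∀ j : Fin 3, Sum.inr j ∈ S → j = i := by
      intro j hj
      by_contra hji
      exact h2 j i hji hj hi
    have hP1 : 1 ≤ P.ncard := by
      have : 0 < P.ncard := (Set.ncard_pos (Set.toFinite _)).2 ⟨Sum.inr i, hi, i, rfl⟩
      omega
    refine ⟨A, ?_, by omega⟩
    intro w hw
    have hw' : Sum.inl w ∉ S := hw
    obtain ⟨d, hd, hadj⟩ := hS _ hw'
    cases d with
    | inl a => exact ⟨a, hd, hadj.1⟩
    | inr k =>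
      have hki : k = i := huniq k hd
      rcases hadj with ⟨rfl, hk0⟩ | ⟨rfl, hk2⟩
      · -- w = u, and i.val = 0; then the vertex inr 2 is dominated by inl v
        have hival : (i : ℕ) = 0 := hki ▸ hk0
        have hns : (Sum.inr 2 : V ⊕ Fin 3) ∉ S := by
          intro hc
          have h := huniq 2 hc
          have : ((2 : Fin 3) : ℕ) = 2 := rfl
          omega
        obtain ⟨d', hd', hadj'⟩ := hS _ hns
        cases d' with
        | inl b =>
          rcases hadj' with ⟨hbu, hb⟩ | ⟨hbv, hb⟩
          · exfalso; simp at hb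
          · exact ⟨b, hd', hbv ▸ huv.symm⟩
        | inr m =>
          exfalso
          have hmi : m = i := huniq m hd'
          have hmval : (m : ℕ) = 0 := hmi ▸ hival
          rcases hadj' with h | h <;> simp [hmval] at h
      · -- w = v, and i.val = 2; then the vertex inr 0 is dominated by inl u
        have hival : (i : ℕ) + 1 = 3 := hki ▸ hk2
        have hns : (Sum.inr 0 : V ⊕ Fin 3) ∉ S := by
          intro hc
          have h := huniq 0 hc
          have : ((0 : Fin 3) : ℕ) = 0 := rfl
          omega
        obtain ⟨d', hd', hadj'⟩ := hS _ hns
        cases d' with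
        | inl b =>
          rcases hadj' with ⟨hbu, hb⟩ | ⟨hbv, hb⟩
          · exact ⟨b, hd', hbu ▸ huv⟩
          · exfalso; simp at hb
        | inr m =>
          exfalso
          have hmi : m = i := huniq m hd'
          have hmval : (m : ℕ) = 2 := by have := hmi ▸ hival; omega
          rcases hadj' with h | h <;> simp [hmval] at h

/-- `msd(G) ≤ 3` for the ordinary domination number. -/
theorem msd_le_three {V : Type} [Fintype V] (G : SimpleGraph V) (hE : G.edgeSet.Nonempty) :
    ∃ (u v : V) (t : ℕ), G.Adj u v ∧ 1 ≤ t ∧ t ≤ 3 ∧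
      gamma (subdiv G u v t) ≠ gamma G := by
  classical
  obtain ⟨e, he⟩ := hE
  induction e using Sym2.ind with
  | _ u v =>
  rw [SimpleGraph.mem_edgeSet] at he
  refine ⟨u, v, 3, he, by norm_num, by norm_num, ?_⟩
  have hne : (Set.ncard '' {S : Set (V ⊕ Fin 3) | IsDominating (subdiv G u v 3) S}).Nonempty :=
    ⟨Set.univ.ncard, Set.univ, fun w hw => absurd (Set.mem_univ w) hw, rfl⟩
  obtain ⟨S, hS, hcard⟩ := Nat.sInf_mem hne
  obtain ⟨D, hD, hble⟩ := exists_smaller_dom he S hS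
  have h1 : gamma G ≤ D.ncard := Nat.sInf_le ⟨D, hD, rfl⟩
  have h2 : gamma (subdiv G u v 3) = S.ncard := hcard.symm
  omega
end
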